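/- Let d ≥ 1, let a ∈ L^∞(ℝ^d; ℝ^{d×d}) be a matrix-valued function, let b ∈ ℝ^{d×d} be a constant matrix, and let ω ⊂ ℝ^d be an open bounded set with 0 ∈ ω. Let x₀ be a 2-Lebesgue point of a (i.e., lim_{r→0+} (1/|B(x₀,r)|) ∫_{B(x₀,r)} |a(y) − a(x₀)|_F² dy = 0, with |·|_F the Frobenius norm). For r > 0 set a_r := a + χ_{x₀ + rω}(b − a), set T_r(x') := x₀ + r x', and define ã : ℝ^d → ℝ^{d×d} by ã := χ_ω·b + χ_{ω^c}·a(x₀). Then for every n ∈ ℕ, lim_{r→0+} ∫_{nω} |a_r(T_r(x')) − ã(x')|_F² dx' = 0. -/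
import Mathlib


open MeasureTheory Topology Filter Pointwise
open scoped Classical

/-- Squared Frobenius norm of a real matrix: `|M|_F² = ∑ i j, (M i j)²`. -/
noncomputable def frobSq {d : ℕ} (M : Matrix (Fin d) (Fin d) ℝ) : ℝ :=
  ∑ i, ∑ j, (M i j) ^ 2

lemma frobSq_nonneg {d : ℕ} (M : Matrix (Fin d) (Fin d) ℝ) : 0 ≤ frobSq M :=
  Finset.sum_nonneg fun _ _ => Finset.sum_nonneg fun _ _ => sq_nonneg _

lemma frobSq_zero {d : ℕ} : frobSq (0 : Matrix (Fin d) (Fin d) ℝ) = 0 := by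
  simp [frobSq]

lemma frobSq_sub_le {d : ℕ} (M N : Matrix (Fin d) (Fin d) ℝ) :
    frobSq (M - N) ≤ 2 * frobSq M + 2 * frobSq N := by
  have h : ∀ i j, (M i j - N i j) ^ 2 ≤ 2 * (M i j) ^ 2 + 2 * (N i j) ^ 2 := by
    intro i j; nlinarith [sq_nonneg (M i j + N i j)]
  calc frobSq (M - N) = ∑ i, ∑ j, (M i j - N i j) ^ 2 := by
        simp [frobSq, Matrix.sub_apply]
    _ ≤ ∑ i, ∑ j, (2 * (M i j) ^ 2 + 2 * (N i j) ^ 2) :=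
        Finset.sum_le_sum fun i _ => Finset.sum_le_sum fun j _ => h i j
    _ = 2 * frobSq M + 2 * frobSq N := by
        simp [frobSq, Finset.sum_add_distrib, Finset.mul_sum]

/-- Convergence of the rescaled perturbed coefficients: if `x₀` is a `2`-Lebesgue point of
the essentially bounded matrix-valued `a`, `a_r := a + χ_{x₀+rω}(b-a)`, `T_r(x') = x₀ + r x'`,
and `ã := χ_ω b + χ_{ω^c} a(x₀)`, then `a_r ∘ T_r → ã` in `L²(nω)` for every `n ∈ ℕ`. -/
theorem stmt_2 (d : ℕ) (hd : 1 ≤ d)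
    (a : EuclideanSpace ℝ (Fin d) → Matrix (Fin d) (Fin d) ℝ)
    (ha_meas : ∀ i j, Measurable fun x => a x i j)
    (C : ℝ) (ha_bdd : ∀ᵐ x ∂volume, frobSq (a x) ≤ C)
    (b : Matrix (Fin d) (Fin d) ℝ)
    (ω : Set (EuclideanSpace ℝ (Fin d))) (hωo : IsOpen ω)
    (hωb : Bornology.IsBounded ω) (h0 : (0 : EuclideanSpace ℝ (Fin d)) ∈ ω)
    (x₀ : EuclideanSpace ℝ (Fin d))
    (hx₀ : Tendsto
      (fun r : ℝ =>
        (volume (Metric.ball x₀ r)).toReal⁻¹ *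
          ∫ y in Metric.ball x₀ r, frobSq (a y - a x₀))
      (𝓝[>] 0) (𝓝 0))
    (ar : ℝ → EuclideanSpace ℝ (Fin d) → Matrix (Fin d) (Fin d) ℝ)
    (har : ∀ r x, ar r x = if x ∈ (fun x' => x₀ + r • x') '' ω then b else a x)
    (atil : EuclideanSpace ℝ (Fin d) → Matrix (Fin d) (Fin d) ℝ)
    (hatil : ∀ x', atil x' = if x' ∈ ω then b else a x₀) :
    ∀ n : ℕ,
      Tendsto (fun r : ℝ => ∫ x' in (n : ℝ) • ω, frobSq (ar r (x₀ + r • x') - atil x'))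
        (𝓝[>] 0) (𝓝 0) := by
  intro n
  haveI : Nontrivial (EuclideanSpace ℝ (Fin d)) := by
    refine Module.nontrivial_of_finrank_pos (R := ℝ) ?_
    rw [finrank_euclideanSpace_fin]; omega
  -- choose a ball around 0 containing n • ω
  obtain ⟨R, hR0, hRsub⟩ : ∃ R : ℝ, 0 < R ∧ (n : ℝ) • ω ⊆ Metric.ball (0 : EuclideanSpace ℝ (Fin d)) R :=
    ((hωb.smul₀ (n : ℝ)).subset_ball_lt 0 0).imp fun R h => ⟨h.1, h.2⟩
  set f : EuclideanSpace ℝ (Fin d) → ℝ := fun y => frobSq (a y - a x₀) with hf_def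
  have hf_nonneg : ∀ y, 0 ≤ f y := fun y => frobSq_nonneg _
  have hf_meas : Measurable f := by
    have hfe : f = fun y => ∑ i, ∑ j, (a y i j - a x₀ i j) ^ 2 := by
      funext y; simp [hf_def, frobSq, Matrix.sub_apply]
    rw [hfe]
    exact Finset.measurable_sum _ fun i _ => Finset.measurable_sum _ fun j _ =>
      ((ha_meas i j).sub measurable_const).pow_const 2
  set D : ℝ := 2 * C + 2 * frobSq (a x₀) with hD_def
  set v : ℝ := (volume (Metric.ball (0 : EuclideanSpace ℝ (Fin d)) 1)).toReal with hv_def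
  have hv_pos : 0 < v := by
    rw [hv_def]
    exact ENNReal.toReal_pos (Metric.measure_ball_pos volume 0 one_pos).ne'
      measure_ball_lt_top.ne
  set K : ℝ := R ^ d * v with hK_def
  have hmeasω : MeasurableSet ((n : ℝ) • ω) := by
    rcases eq_or_ne (n : ℝ) 0 with h | h
    · rw [h, Set.zero_smul_set ⟨0, h0⟩]
      exact measurableSet_singleton 0
    · exact (hωo.smul₀ h).measurableSet
  -- the dominating function
  set G : ℝ → ℝ := fun r =>
    K * ((volume (Metric.ball x₀ (r * R))).toReal⁻¹ *
      ∫ y in Metric.ball x₀ (r * R), frobSq (a y - a x₀)) with hG_def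
  have key : ∀ r : ℝ, 0 < r →
      (∫ x' in (n : ℝ) • ω, frobSq (ar r (x₀ + r • x') - atil x')) ≤ G r := by
    intro r hr
    have hT_meas : Measurable (fun x' : EuclideanSpace ℝ (Fin d) => x₀ + r • x') :=
      measurable_const.add (measurable_id.const_smul r)
    have hTqmp : Measure.QuasiMeasurePreserving (fun x' : EuclideanSpace ℝ (Fin d) => x₀ + r • x')
        volume volume := by
      have h1 := (measurePreserving_add_left (volume : Measure (EuclideanSpace ℝ (Fin d))) x₀).quasiMeasurePreserving
      have h2 := Measure.quasiMeasurePreserving_smul (volume : Measure (EuclideanSpace ℝ (Fin d))) (ne_of_gt hr)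
      exact h1.comp h2
    have haeT : ∀ᵐ x' ∂(volume : Measure (EuclideanSpace ℝ (Fin d))), frobSq (a (x₀ + r • x')) ≤ C := by
      rw [ae_iff] at ha_bdd ⊢
      have := hTqmp.preimage_null ha_bdd
      simpa [Set.preimage_setOf_eq] using this
    -- membership equivalence for the ball
    have hball : ∀ x' : EuclideanSpace ℝ (Fin d), x₀ + r • x' ∈ Metric.ball x₀ (r * R) ↔ x' ∈ Metric.ball (0 : EuclideanSpace ℝ (Fin d)) R := by
      intro x'
      rw [Metric.mem_ball, Metric.mem_ball, dist_eq_norm, dist_eq_norm, add_sub_cancel_left,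
        sub_zero, norm_smul, Real.norm_eq_abs, abs_of_pos hr]
      exact mul_lt_mul_iff_right₀ hr
    -- the indicator form of the dominating integrand
    have hind_eq : (fun x' : EuclideanSpace ℝ (Fin d) => Set.indicator (Metric.ball x₀ (r * R)) f (x₀ + r • x')) =
        Set.indicator (Metric.ball (0 : EuclideanSpace ℝ (Fin d)) R) (fun x' => f (x₀ + r • x')) := by
      funext x'
      by_cases hx' : x' ∈ Metric.ball (0 : EuclideanSpace ℝ (Fin d)) R
      · rw [Set.indicator_of_mem hx', Set.indicator_of_mem ((hball x').mpr hx')]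
      · rw [Set.indicator_of_notMem hx',
          Set.indicator_of_notMem (fun h => hx' ((hball x').mp h))]
    -- integrability of the dominating function
    have hint : Integrable (fun x' : EuclideanSpace ℝ (Fin d) => Set.indicator (Metric.ball x₀ (r * R)) f
        (x₀ + r • x')) volume := by
      rw [hind_eq]
      apply MeasureTheory.IntegrableOn.integrable_indicator _ measurableSet_ball
      apply Measure.integrableOn_of_bounded (M := D) measure_ball_lt_top.ne
      · exact (hf_meas.comp hT_meas).aestronglyMeasurable
      · filter_upwards [ae_restrict_of_ae haeT] with x' hx'
        rw [Real.norm_eq_abs, abs_of_nonneg (hf_nonneg _)]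
        have := frobSq_sub_le (a (x₀ + r • x')) (a x₀)
        simp only [hf_def, hD_def]
        linarith
    -- pointwise bound
    have hpt : ∀ x' : EuclideanSpace ℝ (Fin d), Set.indicator ((n : ℝ) • ω)
        (fun x' => frobSq (ar r (x₀ + r • x') - atil x')) x' ≤
        Set.indicator (Metric.ball x₀ (r * R)) f (x₀ + r • x') := by
      intro x'
      by_cases hx' : x' ∈ (n : ℝ) • ω
      · rw [Set.indicator_of_mem hx']
        have hxball : x₀ + r • x' ∈ Metric.ball x₀ (r * R) := (hball x').mpr (hRsub hx')
        rw [Set.indicator_of_mem hxball]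
        by_cases hω' : x' ∈ ω
        · have himg : x₀ + r • x' ∈ (fun x'' => x₀ + r • x'') '' ω := ⟨x', hω', rfl⟩
          rw [har, hatil, if_pos himg, if_pos hω', sub_self, frobSq_zero]
          exact hf_nonneg _
        · have himg : x₀ + r • x' ∉ (fun x'' => x₀ + r • x'') '' ω := by
            rintro ⟨y, hy, hxy⟩
            have h1 : r • y = r • x' := by
              have := hxy
              simpa using add_left_cancel this
            have : y = x' := smul_right_injective (EuclideanSpace ℝ (Fin d)) (ne_of_gt hr) h1
            exact hω' (this ▸ hy)
          rw [har, hatil, if_neg himg, if_neg hω']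
      · rw [Set.indicator_of_notMem hx']
        exact Set.indicator_apply_nonneg fun _ => hf_nonneg _
    -- combine
    have hle : (∫ x' in (n : ℝ) • ω, frobSq (ar r (x₀ + r • x') - atil x')) ≤
        ∫ x' : EuclideanSpace ℝ (Fin d), Set.indicator (Metric.ball x₀ (r * R)) f (x₀ + r • x') := by
      rw [← integral_indicator hmeasω]
      exact integral_mono_of_nonneg
        (Eventually.of_forall fun x' => Set.indicator_apply_nonneg fun _ => frobSq_nonneg _)
        hint (Eventually.of_forall hpt)
    -- change of variables
    have hcov : (∫ x' : EuclideanSpace ℝ (Fin d), Set.indicator (Metric.ball x₀ (r * R)) f (x₀ + r • x')) =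
        (r ^ d)⁻¹ * ∫ y in Metric.ball x₀ (r * R), f y := by
      have h1 : (∫ x' : EuclideanSpace ℝ (Fin d), Set.indicator (Metric.ball x₀ (r * R)) f (x₀ + r • x')) =
          ∫ x' : EuclideanSpace ℝ (Fin d), (fun y => Set.indicator (Metric.ball x₀ (r * R)) f (x₀ + y)) (r • x') := rfl
      rw [h1, Measure.integral_comp_smul_of_nonneg (volume : Measure (EuclideanSpace ℝ (Fin d)))
        (fun y => Set.indicator (Metric.ball x₀ (r * R)) f (x₀ + y)) r (hR := hr.le)]
      rw [integral_add_left_eq_self (μ := (volume : Measure (EuclideanSpace ℝ (Fin d))))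
        (Set.indicator (Metric.ball x₀ (r * R)) f) x₀]
      rw [integral_indicator measurableSet_ball, finrank_euclideanSpace_fin,
        smul_eq_mul]
    -- volume of the ball
    have hvol : (volume (Metric.ball x₀ (r * R))).toReal = (r * R) ^ d * v := by
      rw [Measure.addHaar_ball_of_pos volume x₀ (mul_pos hr hR0), finrank_euclideanSpace_fin,
        ENNReal.toReal_mul, ENNReal.toReal_ofReal (pow_nonneg (mul_pos hr hR0).le _), hv_def]
    have hGr : G r = (r ^ d)⁻¹ * ∫ y in Metric.ball x₀ (r * R), f y := by
      rw [hG_def]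
      simp only [hvol]
      rw [hK_def]
      have hrd : (0 : ℝ) < r ^ d := pow_pos hr d
      have hRd : (0 : ℝ) < R ^ d := pow_pos hR0 d
      rw [mul_pow]
      field_simp
      ring
    calc (∫ x' in (n : ℝ) • ω, frobSq (ar r (x₀ + r • x') - atil x')) ≤
        ∫ x' : EuclideanSpace ℝ (Fin d), Set.indicator (Metric.ball x₀ (r * R)) f (x₀ + r • x') := hle
      _ = (r ^ d)⁻¹ * ∫ y in Metric.ball x₀ (r * R), f y := hcov
      _ = G r := hGr.symm
  -- the dominating function tends to 0
  have hcomp : Tendsto (fun r : ℝ => r * R) (𝓝[>] 0) (𝓝[>] 0) := by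
    rw [tendsto_nhdsWithin_iff]
    constructor
    · have : Tendsto (fun r : ℝ => r * R) (𝓝 0) (𝓝 (0 * R)) := (tendsto_id.mul_const R)
      rw [zero_mul] at this
      exact this.mono_left nhdsWithin_le_nhds
    · exact eventually_nhdsWithin_of_forall fun r hr => mul_pos hr hR0
  have hGlim : Tendsto G (𝓝[>] 0) (𝓝 0) := by
    have := (hx₀.comp hcomp).const_mul K
    rw [mul_zero] at this
    exact this
  refine squeeze_zero' ?_ ?_ hGlim
  · filter_upwards [self_mem_nhdsWithin] with r _
    exact integral_nonneg fun x' => frobSq_nonneg _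
  · filter_upwards [self_mem_nhdsWithin] with r hr
    exact key r hr
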